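/- Let K ≥ 2 be an integer, let r_2, …, r_K be reals with 1/2 > r_2 ≥ r_3 ≥ … ≥ r_K > 0, set r_1 = 1/2, let d_1 ≥ d_2 ≥ … ≥ d_K > 0 be reals, and let i ∈ {2,…,K}. Then (d_1 + d_2)/(1/2 − r_i)² + Σ_{j=3}^{i} d_j / ((1 − r_i) − r_{j−1})² + Σ_{j=i+1}^{K} d_j / ((1 − r_i) − r_j)² ≤ (d_1 + d_2)/(1/2 − r_2)² + Σ_{j=3}^{K} d_j / (1/2 − r_j)². -/

import Mathlib

private lemma anti_of_step {K a : ℕ} (f : ℕ → ℝ)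
    (h : ∀ k, a ≤ k → k < K → f (k + 1) ≤ f k) :
    ∀ m n, a ≤ m → m ≤ n → n ≤ K → f n ≤ f m := by
  intro m n ham hmn hnK
  induction n, hmn using Nat.le_induction with
  | base => exact le_rfl
  | succ n hmn ih =>
      exact le_trans (h n (ham.trans hmn) (Nat.lt_of_succ_le hnK))
        (ih (Nat.le_of_succ_le hnK))

private lemma div_sq_le (c a b : ℝ) (hc : 0 ≤ c) (ha : 0 < a) (hab : a ≤ b) :
    c / b ^ 2 ≤ c / a ^ 2 := by
  gcongr

theorem H1_flipped_le_H1_base (K : ℕ) (hK : 2 ≤ K)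
    (r : ℕ → ℝ) (hr1 : r 1 = 1 / 2) (hr2 : r 2 < 1 / 2)
    (hrmono : ∀ k, 2 ≤ k → k < K → r (k + 1) ≤ r k) (hrK : 0 < r K)
    (d : ℕ → ℝ) (hdmono : ∀ k, 1 ≤ k → k < K → d (k + 1) ≤ d k) (hdK : 0 < d K)
    (i : ℕ) (hi2 : 2 ≤ i) (hiK : i ≤ K) :
    (d 1 + d 2) / (1 / 2 - r i) ^ 2
        + ∑ j ∈ Finset.Icc 3 i, d j / ((1 - r i) - r (j - 1)) ^ 2
        + ∑ j ∈ Finset.Icc (i + 1) K, d j / ((1 - r i) - r j) ^ 2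
      ≤ (d 1 + d 2) / (1 / 2 - r 2) ^ 2
        + ∑ j ∈ Finset.Icc 3 K, d j / (1 / 2 - r j) ^ 2 := by
  have ranti := anti_of_step r hrmono
  have danti := anti_of_step d hdmono
  have hdpos : ∀ j, 1 ≤ j → j ≤ K → 0 < d j := fun j h1 h2 =>
    lt_of_lt_of_le hdK (danti j K h1 h2 le_rfl)
  have hrlt : ∀ j, 2 ≤ j → j ≤ K → r j < 1 / 2 := fun j h1 h2 =>
    lt_of_le_of_lt (ranti 2 j le_rfl h1 h2) hr2
  have hri : r i < 1 / 2 := hrlt i hi2 hiK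
  -- split RHS sum
  have hsplit : Finset.Icc 3 K = Finset.Icc 3 i ∪ Finset.Icc (i + 1) K := by
    rw [show (3 : ℕ) = 2 + 1 from rfl, Finset.Icc_add_one_left_eq_Ioc, Finset.Icc_add_one_left_eq_Ioc,
      Finset.Icc_add_one_left_eq_Ioc, ← Finset.Ioc_union_Ioc_eq_Ioc hi2 hiK]
  have hdisj : Disjoint (Finset.Icc 3 i) (Finset.Icc (i + 1) K) := by
    apply Finset.disjoint_left.mpr
    intro x hx hx'
    simp only [Finset.mem_Icc] at hx hx'
    omega
  rw [hsplit, Finset.sum_union hdisj, ← add_assoc]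
  apply add_le_add
  apply add_le_add
  · apply div_sq_le _ _ _ (by have := hdpos 1 le_rfl (by omega); have := hdpos 2 one_le_two hK; linarith)
      (by linarith) (by have := hrlt 2 le_rfl hK; have := ranti 2 i le_rfl hi2 hiK; linarith)
  · apply Finset.sum_le_sum
    intro j hj
    simp only [Finset.mem_Icc] at hj
    obtain ⟨hj3, hji⟩ := hj
    have hjK := hji.trans hiK
    have h1 : r (j - 1) < 1 / 2 := hrlt (j - 1) (by omega) (by omega)
    have h2 : r i ≤ r j := ranti j i (by omega) hji hiK
    have h3 : r j < 1 / 2 := hrlt j (by omega) hjK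
    apply div_sq_le _ _ _ (hdpos j (by omega) hjK).le (by linarith) (by linarith)
  · apply Finset.sum_le_sum
    intro j hj
    simp only [Finset.mem_Icc] at hj
    obtain ⟨hj1, hjK⟩ := hj
    have h3 : r j < 1 / 2 := hrlt j (by omega) hjK
    apply div_sq_le _ _ _ (hdpos j (by omega) hjK).le (by linarith) (by linarith)
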